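/- Let N, k be positive integers and ω = e^{2πi/N}. Let Π_1, Π_2 be partitions of {1,…,2k} with |Π_1| + |Π_2| < 2k. Then |⟨I_{Π_1}| F^{⊗k,k} |I_{Π_2}⟩|² ≤ N^{|Π_1|+|Π_2|−2k} ≤ 1/N, where ⟨I_{Π_1}| F^{⊗k,k} |I_{Π_2}⟩ = (|I_{Π_1}|·|I_{Π_2}|)^{−1/2} N^{−k} Σ_{m∈I_{Π_1}, n∈I_{Π_2}} ω^{m·n} and m·n = Σ_{j=1}^k m_j n_j − Σ_{j=k+1}^{2k} m_j n_j. -/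

import Mathlib

open scoped BigOperators Classical

/-- The number of blocks `|Π|` of the partition corresponding to `r`. -/
noncomputable def numBlocks {n : ℕ} (r : Setoid (Fin n)) : ℕ :=
  Nat.card (Quotient r)

/-- The Fourier transform `F = N^{-1/2} ∑_{m,n=1}^N ω^{mn} |m⟩⟨n|`, `ω = e^{2πi/N}`. -/
noncomputable def Fmat (N : ℕ) : Matrix (Fin N) (Fin N) ℂ :=
  fun i j => (Real.sqrt N : ℂ)⁻¹ *
    Complex.exp (2 * Real.pi * Complex.I * (((i : ℕ) + 1) * ((j : ℕ) + 1)) / N)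

/-- `F^{⊗k,k} = F^{⊗k} ⊗ (conj F)^{⊗k}` as a matrix on `(ℂ^N)^{⊗2k}`. -/
noncomputable def Fkk (N k : ℕ) : Matrix (Fin (2*k) → Fin N) (Fin (2*k) → Fin N) ℂ :=
  fun a b => ∏ j : Fin (2*k),
    if (j : ℕ) < k then Fmat N (a j) (b j) else (starRingEnd ℂ) (Fmat N (a j) (b j))

/-- The set `I_Π` of tuples whose equality pattern is exactly `r`. -/
def Iset (N n : ℕ) (r : Setoid (Fin n)) : Set (Fin n → Fin N) :=
  {v | ∀ i j : Fin n, v i = v j ↔ r i j}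

/-- The unit vector `|I_Π⟩ = |I_Π|^{-1/2} ∑_{n ∈ I_Π} |n⟩`. -/
noncomputable def ketI (N n : ℕ) (r : Setoid (Fin n)) : (Fin n → Fin N) → ℂ :=
  fun v => if v ∈ Iset N n r then ((Real.sqrt ((Iset N n r).ncard) : ℂ))⁻¹ else 0

/-- The matrix element `⟨I_{Π₁}| F^{⊗k,k} |I_{Π₂}⟩`. -/
noncomputable def matEltI (N k : ℕ) (r₁ r₂ : Setoid (Fin (2*k))) : ℂ :=
  ∑ a : Fin (2*k) → Fin N, ∑ b : Fin (2*k) → Fin N,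
    (starRingEnd ℂ) (ketI N (2*k) r₁ a) * Fkk N k a b * ketI N (2*k) r₂ b

lemma abs_Fmat (N : ℕ) (i j : Fin N) :
    ‖Fmat N i j‖ = (Real.sqrt N)⁻¹ := by
  unfold Fmat
  rw [norm_mul, norm_inv, Complex.norm_real, Real.norm_eq_abs, abs_of_nonneg (Real.sqrt_nonneg _)]
  have h : (2 * Real.pi * Complex.I * (((i : ℕ) + 1) * ((j : ℕ) + 1)) / N : ℂ)
      = ((2 * Real.pi * (((i : ℕ) + 1) * ((j : ℕ) + 1)) / N : ℝ) : ℂ) * Complex.I := by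
    push_cast
    ring
  rw [h, Complex.norm_exp_ofReal_mul_I, mul_one]

lemma abs_Fkk (N k : ℕ) (a b : Fin (2*k) → Fin N) :
    ‖Fkk N k a b‖ = ((Real.sqrt N)⁻¹) ^ (2*k) := by
  unfold Fkk
  rw [norm_prod]
  rw [Finset.prod_congr rfl (g := fun _ => (Real.sqrt N)⁻¹) (fun j _ => by
    split
    · exact abs_Fmat N (a j) (b j)
    · rw [Complex.norm_conj]; exact abs_Fmat N (a j) (b j))]
  simp

lemma abs_ketI (N n : ℕ) (r : Setoid (Fin n)) (v : Fin n → Fin N) :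
    ‖ketI N n r v‖ =
      if v ∈ Iset N n r then (Real.sqrt ((Iset N n r).ncard))⁻¹ else 0 := by
  unfold ketI
  split
  · rw [norm_inv, Complex.norm_real, Real.norm_eq_abs, abs_of_nonneg (Real.sqrt_nonneg _)]
  · simp

lemma sum_abs_ketI (N n : ℕ) (r : Setoid (Fin n)) :
    ∑ v : Fin n → Fin N, ‖ketI N n r v‖
      = Real.sqrt ((Iset N n r).ncard) := by
  classical
  rw [Finset.sum_congr rfl (fun v _ => abs_ketI N n r v)]
  have h1 : ∀ v : Fin n → Fin N, (v ∈ Iset N n r) = (v ∈ (Iset N n r).toFinset) := by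
    intro v; simp
  simp only [h1]
  rw [Finset.sum_ite_mem, Finset.univ_inter, Finset.sum_const, nsmul_eq_mul]
  rw [← Set.ncard_eq_toFinset_card']
  set c : ℕ := (Iset N n r).ncard
  rcases Nat.eq_zero_or_pos c with hc | hc
  · simp [hc]
  · have hcpos : (0:ℝ) < c := by exact_mod_cast hc
    have hs : Real.sqrt c ≠ 0 := by positivity
    rw [← Real.mul_self_sqrt (le_of_lt hcpos)]
    field_simp
    rw [Real.sqrt_sq (Real.sqrt_nonneg _)]

lemma ncard_Iset_le (N n : ℕ) (r : Setoid (Fin n)) :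
    (Iset N n r).ncard ≤ N ^ numBlocks r := by
  classical
  have hinj : Function.Injective
      (fun (v : Iset N n r) (q : Quotient r) => v.1 q.out) := by
    intro v w h
    have hvw : ∀ q : Quotient r, v.1 q.out = w.1 q.out := fun q => congrFun h q
    apply Subtype.ext
    funext i
    have hri : r (Quotient.mk r i).out i :=
      Quotient.exact (Quotient.out_eq (Quotient.mk r i))
    have h1 : v.1 (Quotient.mk r i).out = v.1 i := (v.2 _ _).mpr hri
    have h2 : w.1 (Quotient.mk r i).out = w.1 i := (w.2 _ _).mpr hri
    rw [← h1, ← h2, hvw]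
  calc (Iset N n r).ncard = Nat.card (Iset N n r) := (Nat.card_coe_set_eq _).symm
    _ ≤ Nat.card (Quotient r → Fin N) := Nat.card_le_card_of_injective _ hinj
    _ = N ^ numBlocks r := by
        rw [Nat.card_fun, Nat.card_eq_fintype_card, Fintype.card_fin]; rfl

theorem stmt18 (N k : ℕ) (hN : 0 < N) (hk : 0 < k) (r₁ r₂ : Setoid (Fin (2*k)))
    (hlt : numBlocks r₁ + numBlocks r₂ < 2*k) :
    ‖matEltI N k r₁ r₂‖ ^ 2 ≤
        (N : ℝ) ^ ((numBlocks r₁ + numBlocks r₂ : ℤ) - 2*k) ∧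
      (N : ℝ) ^ ((numBlocks r₁ + numBlocks r₂ : ℤ) - 2*k) ≤ 1/(N : ℝ) := by
  classical
  have hN0 : (0:ℝ) < N := by exact_mod_cast hN
  have hNne : (N:ℝ) ≠ 0 := ne_of_gt hN0
  have hN1 : (1:ℝ) ≤ N := by exact_mod_cast hN
  set b₁ := numBlocks r₁
  set b₂ := numBlocks r₂
  set n₁ : ℕ := (Iset N (2*k) r₁).ncard
  set n₂ : ℕ := (Iset N (2*k) r₂).ncard
  set κ : ℝ := ((Real.sqrt N)⁻¹) ^ (2*k) with hκdef
  have hκ0 : 0 ≤ κ := by positivity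
  -- triangle inequality bound
  have habs : ‖matEltI N k r₁ r₂‖ ≤
      κ * (Real.sqrt n₁ * Real.sqrt n₂) := by
    have step1 : ‖matEltI N k r₁ r₂‖ ≤
        ∑ a : Fin (2*k) → Fin N, ∑ b : Fin (2*k) → Fin N,
          ‖ketI N (2*k) r₁ a‖ * κ * ‖ketI N (2*k) r₂ b‖ := by
      refine le_trans (norm_sum_le _ _) (Finset.sum_le_sum fun a _ => ?_)
      refine le_trans (norm_sum_le _ _) (Finset.sum_le_sum fun b _ => ?_)
      rw [norm_mul, norm_mul, Complex.norm_conj, abs_Fkk]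
    have step2 : (∑ a : Fin (2*k) → Fin N, ∑ b : Fin (2*k) → Fin N,
          ‖ketI N (2*k) r₁ a‖ * κ * ‖ketI N (2*k) r₂ b‖)
        = κ * ((∑ a : Fin (2*k) → Fin N, ‖ketI N (2*k) r₁ a‖) *
            (∑ b : Fin (2*k) → Fin N, ‖ketI N (2*k) r₂ b‖)) := by
      rw [Finset.sum_mul_sum, Finset.mul_sum]
      exact Finset.sum_congr rfl fun a _ => by
        rw [Finset.mul_sum]
        exact Finset.sum_congr rfl fun b _ => by ring
    calc ‖matEltI N k r₁ r₂‖ ≤ _ := step1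
      _ = _ := step2
      _ = κ * (Real.sqrt n₁ * Real.sqrt n₂) := by
          rw [sum_abs_ketI, sum_abs_ketI]
  have hsq : ‖matEltI N k r₁ r₂‖ ^ 2 ≤ (κ * (Real.sqrt n₁ * Real.sqrt n₂)) ^ 2 :=
    pow_le_pow_left₀ (norm_nonneg _) habs 2
  have hκ2 : κ ^ 2 = ((N:ℝ) ^ (2*k))⁻¹ := by
    rw [hκdef, ← pow_mul, mul_comm (2*k) 2, pow_mul, inv_pow, Real.sq_sqrt hN0.le, inv_pow]
  have hval : (κ * (Real.sqrt n₁ * Real.sqrt n₂)) ^ 2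
      = (n₁:ℝ) * (n₂:ℝ) * ((N:ℝ) ^ (2*k))⁻¹ := by
    rw [mul_pow, mul_pow, Real.sq_sqrt (by positivity), Real.sq_sqrt (by positivity), hκ2]
    ring
  have hzp : (N : ℝ) ^ ((b₁ + b₂ : ℤ) - 2*k)
      = (N:ℝ)^b₁ * (N:ℝ)^b₂ * ((N:ℝ) ^ (2*k))⁻¹ := by
    rw [show ((b₁:ℤ) + (b₂:ℤ)) - 2*(k:ℤ) = (b₁:ℤ) + ((b₂:ℤ) + (-((2*k:ℕ):ℤ))) by
      push_cast; ring]
    rw [zpow_add₀ hNne, zpow_add₀ hNne, zpow_natCast, zpow_natCast, zpow_neg, zpow_natCast]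
    ring
  constructor
  · rw [hzp]
    calc ‖matEltI N k r₁ r₂‖ ^ 2
        ≤ (κ * (Real.sqrt n₁ * Real.sqrt n₂)) ^ 2 := hsq
      _ = (n₁:ℝ) * (n₂:ℝ) * ((N:ℝ) ^ (2*k))⁻¹ := hval
      _ ≤ (N:ℝ)^b₁ * (N:ℝ)^b₂ * ((N:ℝ) ^ (2*k))⁻¹ := by
          apply mul_le_mul_of_nonneg_right ?_ (by positivity)
          have h1 : (n₁:ℝ) ≤ (N:ℝ)^b₁ := by exact_mod_cast ncard_Iset_le N (2*k) r₁
          have h2 : (n₂:ℝ) ≤ (N:ℝ)^b₂ := by exact_mod_cast ncard_Iset_le N (2*k) r₂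
          exact mul_le_mul h1 h2 (by positivity) (by positivity)
  · have he : ((b₁:ℤ) + (b₂:ℤ)) - 2*(k:ℤ) ≤ -1 := by omega
    calc (N : ℝ) ^ ((b₁ + b₂ : ℤ) - 2*k) ≤ (N:ℝ) ^ (-1 : ℤ) :=
          zpow_le_zpow_right₀ hN1 he
      _ = 1/(N:ℝ) := by rw [zpow_neg_one, one_div]
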